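/- Let X be a topological vector space and F_n : X → ℝ̄ a sequence of level convex functions. Then the Γ-upper limit F''(x) = sup over open neighborhoods U of x of limsup_n inf_{y ∈ U} F_n(y) is level convex. -/

import Mathlib

open Filter

/-- A function into the extended reals is level convex if
`F (θ x + (1-θ) y) ≤ F x ⊔ F y` for all `θ ∈ (0,1)`. -/
def LevelConvex {X : Type*} [AddCommGroup X] [Module ℝ X] (F : X → EReal) : Prop :=
  ∀ θ : ℝ, 0 < θ → θ < 1 → ∀ x y : X, F (θ • x + (1 - θ) • y) ≤ F x ⊔ F y

/-- The Γ-upper limit of a sequence of functionals. -/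
noncomputable def gammaLimsup {X : Type*} [TopologicalSpace X]
    (F : ℕ → X → EReal) (x : X) : EReal :=
  ⨆ U ∈ {U : Set X | IsOpen U ∧ x ∈ U},
    Filter.limsup (fun n => ⨅ y ∈ U, F n y) Filter.atTop

theorem levelConvex_gammaLimsup
    {X : Type*} [AddCommGroup X] [Module ℝ X] [TopologicalSpace X]
    [IsTopologicalAddGroup X] [ContinuousSMul ℝ X]
    (F : ℕ → X → EReal) (hF : ∀ n, LevelConvex (F n)) :
    LevelConvex (gammaLimsup F) := by
  intro θ hθ0 hθ1 x y
  rw [gammaLimsup]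
  apply iSup₂_le
  rintro U ⟨hUo, hUz⟩
  have hc : Continuous fun p : X × X => θ • p.1 + (1 - θ) • p.2 := ((continuous_fst.const_smul θ).add (continuous_snd.const_smul (1 - θ)))
  have hmem : (fun p : X × X => θ • p.1 + (1 - θ) • p.2) ⁻¹' U ∈ nhds (x, y) :=
    hc.continuousAt.preimage_mem_nhds (hUo.mem_nhds hUz)
  rw [nhds_prod_eq, Filter.mem_prod_iff] at hmem
  obtain ⟨V0, hV0, W0, hW0, hVW⟩ := hmem
  obtain ⟨V, hVsub, hVo, hxV⟩ := mem_nhds_iff.mp hV0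
  obtain ⟨W, hWsub, hWo, hyW⟩ := mem_nhds_iff.mp hW0
  have key : ∀ n, (⨅ z ∈ U, F n z) ≤ (⨅ z ∈ V, F n z) ⊔ (⨅ z ∈ W, F n z) := by
    intro n
    by_contra h
    push_neg at h
    have hV' : (⨅ z ∈ V, F n z) < ⨅ z ∈ U, F n z := lt_of_le_of_lt le_sup_left h
    have hW' : (⨅ z ∈ W, F n z) < ⨅ z ∈ U, F n z := lt_of_le_of_lt le_sup_right h
    rw [iInf_lt_iff] at hV' hW'
    obtain ⟨v, hv⟩ := hV'
    obtain ⟨w, hw⟩ := hW'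
    rw [iInf_lt_iff] at hv hw
    obtain ⟨hvV, hv⟩ := hv
    obtain ⟨hwW, hw⟩ := hw
    have hmem : θ • v + (1 - θ) • w ∈ U :=
      hVW (Set.mk_mem_prod (hVsub hvV) (hWsub hwW))
    have h1 : (⨅ z ∈ U, F n z) ≤ F n (θ • v + (1 - θ) • w) :=
      biInf_le _ hmem
    have h2 := hF n θ hθ0 hθ1 v w
    have := h1.trans (h2.trans (sup_le hv.le hw.le))
    exact absurd this (not_le.mpr (lt_of_le_of_lt h1 (h2.trans_lt (sup_lt_iff.mpr ⟨hv, hw⟩)))).elim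
  calc limsup (fun n => ⨅ z ∈ U, F n z) atTop
      ≤ limsup (fun n => (⨅ z ∈ V, F n z) ⊔ (⨅ z ∈ W, F n z)) atTop :=
        limsup_le_limsup (Eventually.of_forall key)
    _ ≤ limsup (fun n => ⨅ z ∈ V, F n z) atTop ⊔ limsup (fun n => ⨅ z ∈ W, F n z) atTop := by
        rw [limsup_max]
    _ ≤ gammaLimsup F x ⊔ gammaLimsup F y := by
        apply sup_le_sup
        · exact le_iSup₂_of_le V ⟨hVo, hxV⟩ le_rfl
        · exact le_iSup₂_of_le W ⟨hWo, hyW⟩ le_rfl
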